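/- If the isoperimetric constant of a finite graph G satisfies i(G) > r − 1 for some positive integer r, then G is at least r-robust. -/

import Mathlib

/-- A set `S` is `r`-reachable in `G` if some vertex in `S` has at least `r` neighbors outside `S`. -/
def rReachable {V : Type*} (G : SimpleGraph V) (r : ℕ) (S : Set V) : Prop :=
  ∃ i ∈ S, r ≤ ({j | G.Adj i j} \ S).ncard

/-- A graph is `r`-robust if for every pair of nonempty disjoint vertex subsets,
at least one of them is `r`-reachable. -/
def rRobust {V : Type*} (G : SimpleGraph V) (r : ℕ) : Prop :=
  ∀ X₁ X₂ : Set V, X₁.Nonempty → X₂.Nonempty → Disjoint X₁ X₂ →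
    rReachable G r X₁ ∨ rReachable G r X₂

/-- The number of boundary edges of a vertex set `S`: ordered pairs (i,j) with i ∈ S,
j ∉ S, and i adjacent to j. -/
noncomputable def edgeBoundaryCount {V : Type*} (G : SimpleGraph V) (S : Set V) : ℕ :=
  {p : V × V | G.Adj p.1 p.2 ∧ p.1 ∈ S ∧ p.2 ∉ S}.ncard

/-- The isoperimetric constant of a finite graph. -/
noncomputable def isoConst (V : Type*) [Fintype V] (G : SimpleGraph V) : ℝ :=
  sInf {x : ℝ | ∃ S : Set V, S.Nonempty ∧ 2 * S.ncard ≤ Fintype.card V ∧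
    x = (edgeBoundaryCount G S : ℝ) / (S.ncard : ℝ)}

/-- If the isoperimetric constant of a finite graph exceeds r - 1 for a positive
integer r, then the graph is at least r-robust. -/
theorem isoConst_gt_imp_robust {V : Type*} [Fintype V] (G : SimpleGraph V) (r : ℕ)
    (hr : 0 < r) (h : (r : ℝ) - 1 < isoConst V G) : rRobust G r := by
  classical
  have key : ∀ X : Set V, X.Nonempty → 2 * X.ncard ≤ Fintype.card V → rReachable G r X := by
    intro X hX hXcard
    by_contra hnot
    rw [rReachable] at hnot
    push_neg at hnot
    -- hnot : ∀ i ∈ X, ({j | G.Adj i j} \ X).ncard < r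
    set P : Finset (V × V) :=
      Finset.univ.filter (fun p => G.Adj p.1 p.2 ∧ p.1 ∈ X ∧ p.2 ∉ X) with hP
    have hPset : {p : V × V | G.Adj p.1 p.2 ∧ p.1 ∈ X ∧ p.2 ∉ X} = ↑P := by
      ext p; simp [hP]
    have hEB : edgeBoundaryCount G X = P.card := by
      rw [edgeBoundaryCount, hPset, Set.ncard_coe_finset]
    have hfib : ∀ i ∈ X.toFinset, (P.filter (fun p => p.1 = i)).card ≤ r - 1 := by
      intro i hi
      rw [Set.mem_toFinset] at hi
      have hcard : (P.filter (fun p => p.1 = i)).card = ({j | G.Adj i j} \ X).ncard := by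
        have hset : ({j | G.Adj i j} \ X) = ↑((P.filter (fun p => p.1 = i)).image Prod.snd) := by
          ext j
          simp only [Set.mem_diff, Set.mem_setOf_eq, Finset.coe_image, Set.mem_image,
            Finset.mem_coe, Finset.mem_filter, hP, Finset.mem_univ, true_and]
          constructor
          · rintro ⟨hadj, hj⟩
            exact ⟨(i, j), ⟨⟨hadj, hi, hj⟩, rfl⟩, rfl⟩
          · rintro ⟨p, ⟨⟨hadj, _, hj⟩, h1⟩, h2⟩
            subst h1; subst h2; exact ⟨hadj, hj⟩
        rw [hset, Set.ncard_coe_finset, Finset.card_image_of_injOn]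
        intro p hp q hq hpq
        simp only [Finset.mem_coe, Finset.mem_filter] at hp hq
        exact Prod.ext (hp.2.trans hq.2.symm) hpq
      have := hnot i hi
      omega
    have hsum : P.card = ∑ i ∈ X.toFinset, (P.filter (fun p => p.1 = i)).card := by
      apply Finset.card_eq_sum_card_fiberwise
      intro p hp
      simp only [hP, Finset.mem_coe, Finset.mem_filter] at hp
      rw [Finset.mem_coe, Set.mem_toFinset]
      exact hp.2.2.1
    have hbound : edgeBoundaryCount G X ≤ (r - 1) * X.ncard := by
      rw [hEB, hsum, Set.ncard_eq_toFinset_card']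
      calc ∑ i ∈ X.toFinset, (P.filter (fun p => p.1 = i)).card
          ≤ ∑ _i ∈ X.toFinset, (r - 1) := Finset.sum_le_sum hfib
        _ = (r - 1) * X.toFinset.card := by rw [Finset.sum_const, smul_eq_mul, Nat.mul_comm]
    have hncpos : 0 < X.ncard := (Set.ncard_pos X.toFinite).mpr hX
    have hmem : (edgeBoundaryCount G X : ℝ) / (X.ncard : ℝ) ∈
        {x : ℝ | ∃ S : Set V, S.Nonempty ∧ 2 * S.ncard ≤ Fintype.card V ∧
          x = (edgeBoundaryCount G S : ℝ) / (S.ncard : ℝ)} := ⟨X, hX, hXcard, rfl⟩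
    have hbdd : BddBelow {x : ℝ | ∃ S : Set V, S.Nonempty ∧ 2 * S.ncard ≤ Fintype.card V ∧
        x = (edgeBoundaryCount G S : ℝ) / (S.ncard : ℝ)} := by
      refine ⟨0, ?_⟩
      rintro x ⟨S, _, _, rfl⟩
      positivity
    have h1 : isoConst V G ≤ (edgeBoundaryCount G X : ℝ) / (X.ncard : ℝ) :=
      csInf_le hbdd hmem
    have h2 : (edgeBoundaryCount G X : ℝ) / (X.ncard : ℝ) ≤ (r : ℝ) - 1 := by
      rw [div_le_iff₀ (by exact_mod_cast hncpos)]
      have : ((r : ℝ) - 1) = ((r - 1 : ℕ) : ℝ) := by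
        rw [Nat.cast_sub hr]; simp
      rw [this, ← Nat.cast_mul]
      exact_mod_cast hbound
    linarith
  intro X₁ X₂ h₁ h₂ hdisj
  have hsum : X₁.ncard + X₂.ncard ≤ Fintype.card V := by
    rw [← Set.ncard_union_eq hdisj X₁.toFinite X₂.toFinite]
    calc (X₁ ∪ X₂).ncard ≤ (Set.univ : Set V).ncard :=
          Set.ncard_le_ncard (Set.subset_univ _) Set.finite_univ
      _ = Fintype.card V := by rw [Set.ncard_univ, Nat.card_eq_fintype_card]
  by_cases hc : 2 * X₁.ncard ≤ Fintype.card V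
  · exact Or.inl (key X₁ h₁ hc)
  · exact Or.inr (key X₂ h₂ (by omega))
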